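/- For the polynomial p_f(t) = t^{2j+1} + t^{2j} - f t + f with j a positive natural number and f a real number, if z is a complex root of p_f satisfying |z - (-1)| > 2|f|/(1 - |f|) and |f| < 1, then |z| < 1. -/

import Mathlib

theorem stmt_0 (j : ℕ) (hj : 1 ≤ j) (f : ℝ) (hf : |f| < 1)
    (z : ℂ) (hz : z ^ (2 * j + 1) + z ^ (2 * j) - (f : ℂ) * z + (f : ℂ) = 0)
    (hdist : ‖z - (-1)‖ > 2 * |f| / (1 - |f|)) :
    ‖z‖ < 1 := by
  by_contra h
  push_neg at h
  have key : z ^ (2 * j) * (z + 1) = (f : ℂ) * (z - 1) := by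
    linear_combination hz
  have habs : ‖z‖ ^ (2 * j) * ‖z + 1‖
      = |f| * ‖z - 1‖ := by
    have := congrArg norm key
    simpa [norm_mul, norm_pow, Complex.norm_real] using this
  have h1 : (1 : ℝ) ≤ ‖z‖ ^ (2 * j) := one_le_pow₀ h
  have h2 : ‖z + 1‖ ≤ ‖z‖ ^ (2 * j) * ‖z + 1‖ := by
    nlinarith [norm_nonneg (z + 1)]
  have h3 : ‖z - 1‖ ≤ ‖z + 1‖ + 2 := by
    calc ‖z - 1‖ = ‖(z + 1) + (-2)‖ := by ring_nf
      _ ≤ ‖z + 1‖ + ‖(-2 : ℂ)‖ := norm_add_le _ _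
      _ = ‖z + 1‖ + 2 := by norm_num
  have hf' : 0 < 1 - |f| := by linarith
  have hdist' : 2 * |f| < ‖z + 1‖ * (1 - |f|) := by
    rw [gt_iff_lt, div_lt_iff₀ hf'] at hdist
    simpa [sub_neg_eq_add] using hdist
  nlinarith [abs_nonneg f, norm_nonneg (z + 1)]
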